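/- Let S = {s₁, …, s_q} be a finite set, W = {S₁, …, S_r} a nonempty family of subsets of S, and h ≥ 0 an integer. Construct the complete bipartite mixed graph H' = (A, B, E') and subgraph H = (A, B, E) by: A = {a₀, a₁, …, a_q}; B = {b₀, b₁, …, b_r}; E' consists of the directed edges b₀→a₀; a₀→b_j for all 1 ≤ j ≤ r; a_i→b₀ for all 1 ≤ i ≤ q; b_j→a_i whenever s_i ∈ S_j; and a_i→b_j whenever s_i ∉ S_j; and E = {a₀→b_j : 1 ≤ j ≤ r}. If there exists S' ⊆ S with |S'| ≤ h containing at least one element of each S_j, then there exists P ⊆ E' − E with |P| ≤ h + r + 1 satisfying Property N1 (every connected component of (A, B, E ∪ P) is strongly connected) and Property N2 (for every connected component D of H, all vertices of D lie in a single connected component of (A, B, P)). -/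

import Mathlib

/-- Vertices of the bipartite mixed graph: `Sum.inl none` is `a₀`,
`Sum.inl (some i)` is `a_i`, `Sum.inr none` is `b₀`, `Sum.inr (some j)` is `b_j`. -/
abbrev Vtx (q r : ℕ) := Option (Fin q) ⊕ Option (Fin r)

/-- Direction of the unique edge between `a`-vertex `i` and `b`-vertex `j` in the
complete bipartite mixed graph of the reduction: `True` means directed `a → b`.
The edge `(a₀, b₀)` is directed `b₀ → a₀`; `(a₀, b_j)` is directed `a₀ → b_j`;
`(a_i, b₀)` is directed `a_i → b₀`; `(a_i, b_j)` is directed `b_j → a_i`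
iff `s_i ∈ S_j`. -/
def AtoB {q r : ℕ} (W : Fin r → Set (Fin q)) :
    Option (Fin q) → Option (Fin r) → Prop
  | none, none => False
  | none, some _ => True
  | some _, none => True
  | some i, some j => i ∉ W j

/-- The edge set `E = {a₀ → b_j : 1 ≤ j ≤ r}`. -/
def Eset (q r : ℕ) : Set (Option (Fin q) × Option (Fin r)) :=
  {e | e.1 = none ∧ e.2 ≠ none}

/-- One traversable step along an edge in `S`, respecting edge directions. -/
def TStep {q r : ℕ} (W : Fin r → Set (Fin q))
    (S : Set (Option (Fin q) × Option (Fin r))) (v w : Vtx q r) : Prop :=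
  ∃ e ∈ S, (AtoB W e.1 e.2 ∧ v = Sum.inl e.1 ∧ w = Sum.inr e.2) ∨
           (¬ AtoB W e.1 e.2 ∧ v = Sum.inr e.2 ∧ w = Sum.inl e.1)

/-- Mutual reachability along traversable paths using edges in `S`. -/
def TMut {q r : ℕ} (W : Fin r → Set (Fin q))
    (S : Set (Option (Fin q) × Option (Fin r))) (v w : Vtx q r) : Prop :=
  Relation.ReflTransGen (TStep W S) v w ∧ Relation.ReflTransGen (TStep W S) w v

/-- Direction-blind adjacency via an edge in `S`. -/
def GAdj {q r : ℕ} (S : Set (Option (Fin q) × Option (Fin r))) (v w : Vtx q r) : Prop :=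
  ∃ e ∈ S, (v = Sum.inl e.1 ∧ w = Sum.inr e.2) ∨ (v = Sum.inr e.2 ∧ w = Sum.inl e.1)

/-- Direction-blind connectivity via edges in `S`. -/
def GConn {q r : ℕ} (S : Set (Option (Fin q) × Option (Fin r))) :
    Vtx q r → Vtx q r → Prop :=
  Relation.ReflTransGen (GAdj S)

/-- `D` is a connected component of the (direction-blind) graph with edge set `S`. -/
def GCC {q r : ℕ} (S : Set (Option (Fin q) × Option (Fin r))) (D : Set (Vtx q r)) : Prop :=
  ∃ v, D = {w | GConn S v w}

/-- Property N1: every connected component of the mixed graph with edge set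
`E ∪ P` is strongly connected. -/
def PropN1 {q r : ℕ} (W : Fin r → Set (Fin q))
    (P : Set (Option (Fin q) × Option (Fin r))) : Prop :=
  ∀ D : Set (Vtx q r), GCC (Eset q r ∪ P) D →
    ∀ v ∈ D, ∀ w ∈ D, TMut W (Eset q r ∪ P) v w

/-- Property N2: the vertices of each connected component of `(A, B, E)` are
connected in `(A, B, P)`. -/
def PropN2 {q r : ℕ} (P : Set (Option (Fin q) × Option (Fin r))) : Prop :=
  ∀ D : Set (Vtx q r), GCC (Eset q r) D → ∀ v ∈ D, ∀ w ∈ D, GConn P v w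

section Aux

variable {q r : ℕ}

lemma gadj_symm {S : Set (Option (Fin q) × Option (Fin r))} : Symmetric (GAdj S) := by
  rintro v w ⟨e, he, (⟨h1, h2⟩ | ⟨h1, h2⟩)⟩
  · exact ⟨e, he, Or.inr ⟨h2, h1⟩⟩
  · exact ⟨e, he, Or.inl ⟨h2, h1⟩⟩

lemma gconn_symm {S : Set (Option (Fin q) × Option (Fin r))} : Symmetric (GConn S) :=
  by haveI : Std.Symm (GAdj S) := ⟨fun _ _ h => gadj_symm h⟩; intro x y h; exact Std.Symm.symm (r := Relation.ReflTransGen (GAdj S)) x y h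

end Aux


/-- If the hitting set instance has a solution of size at most `h`, then the reduction
instance has a solution `P ⊆ E' - E` of size at most `h + r + 1` satisfying
Properties N1 and N2. -/
theorem stmt11 (q r h : ℕ) (hr : 0 < r) (W : Fin r → Set (Fin q))
    (hhit : ∃ S' : Set (Fin q), S'.ncard ≤ h ∧ ∀ j, (S' ∩ W j).Nonempty) :
    ∃ P : Set (Option (Fin q) × Option (Fin r)),
      (∀ e ∈ P, e ∉ Eset q r) ∧ P.ncard ≤ h + r + 1 ∧ PropN1 W P ∧ PropN2 P := by
  obtain ⟨S', hS'card, hS'hit⟩ := hhit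
  choose f hf using hS'hit
  have hfS' : ∀ j, f j ∈ S' := fun j => (hf j).1
  have hfW : ∀ j, f j ∈ W j := fun j => (hf j).2
  set c : Option (Fin q) × Option (Fin r) := (none, none) with hc
  set S1 : Set (Option (Fin q) × Option (Fin r)) :=
    Set.range (fun j => ((some (f j) : Option (Fin q)), (none : Option (Fin r)))) with hS1
  set S2 : Set (Option (Fin q) × Option (Fin r)) :=
    Set.range (fun j => ((some (f j) : Option (Fin q)), (some j : Option (Fin r)))) with hS2
  refine ⟨insert c (S1 ∪ S2), ?_, ?_, ?_, ?_⟩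
  · rintro e (rfl | (⟨j, rfl⟩ | ⟨j, rfl⟩)) ⟨he1, he2⟩ <;> simp_all
  · -- cardinality
    have h1 : S1.ncard ≤ h := by
      have : S1 = (fun i => ((some i : Option (Fin q)), (none : Option (Fin r)))) '' Set.range f := by
        rw [← Set.range_comp]; rfl
      rw [this]
      calc ((fun i => ((some i : Option (Fin q)), (none : Option (Fin r)))) '' Set.range f).ncard
          ≤ (Set.range f).ncard := Set.ncard_image_le
        _ ≤ S'.ncard := Set.ncard_le_ncard (Set.range_subset_iff.mpr hfS') S'.toFinite
        _ ≤ h := hS'card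
    have h2 : S2.ncard ≤ r := by
      have : S2 = (fun j => ((some (f j) : Option (Fin q)), (some j : Option (Fin r)))) '' Set.univ := by
        rw [Set.image_univ]
      rw [this]
      calc ((fun j => ((some (f j) : Option (Fin q)), (some j : Option (Fin r)))) '' Set.univ).ncard
          ≤ (Set.univ : Set (Fin r)).ncard := Set.ncard_image_le
        _ = r := by simp [Set.ncard_univ]
    calc (insert c (S1 ∪ S2)).ncard ≤ (S1 ∪ S2).ncard + 1 := Set.ncard_insert_le _ _
      _ ≤ S1.ncard + S2.ncard + 1 := by
          have := Set.ncard_union_le S1 S2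
          omega
      _ ≤ h + r + 1 := by omega
  all_goals
    set P : Set (Option (Fin q) × Option (Fin r)) := insert c (S1 ∪ S2) with hP
    have hmc : c ∈ P := Set.mem_insert _ _
    have hm1 : ∀ j, ((some (f j) : Option (Fin q)), (none : Option (Fin r))) ∈ P :=
      fun j => Set.mem_insert_of_mem _ (Or.inl ⟨j, rfl⟩)
    have hm2 : ∀ j, ((some (f j) : Option (Fin q)), (some j : Option (Fin r))) ∈ P :=
      fun j => Set.mem_insert_of_mem _ (Or.inr ⟨j, rfl⟩)
  · -- PropN1
    set EP := Eset q r ∪ P with hEP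
    let R := Relation.ReflTransGen (TStep W EP)
    -- step lemmas
    have step1 : ∀ j : Fin r, TStep W EP (Sum.inl none) (Sum.inr (some j)) :=
      fun j => ⟨(none, some j), Or.inl ⟨rfl, by simp⟩, Or.inl ⟨trivial, rfl, rfl⟩⟩
    have step2 : ∀ j : Fin r, TStep W EP (Sum.inr (some j)) (Sum.inl (some (f j))) :=
      fun j => ⟨(some (f j), some j), Or.inr (hm2 j),
        Or.inr ⟨fun hn => hn (hfW j), rfl, rfl⟩⟩
    have step3 : ∀ j : Fin r, TStep W EP (Sum.inl (some (f j))) (Sum.inr none) :=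
      fun j => ⟨(some (f j), none), Or.inr (hm1 j), Or.inl ⟨trivial, rfl, rfl⟩⟩
    have step4 : TStep W EP (Sum.inr none) (Sum.inl none) :=
      ⟨(none, none), Or.inr hmc, Or.inr ⟨fun hn => hn, rfl, rfl⟩⟩
    set j₀ : Fin r := ⟨0, hr⟩
    -- reach to/from hub a₀
    have hubBto : ∀ j : Fin r, R (Sum.inr (some j)) (Sum.inl none) := fun j =>
      ((Relation.ReflTransGen.single (step2 j)).tail (step3 j)).tail step4
    have hubBfrom : ∀ j : Fin r, R (Sum.inl none) (Sum.inr (some j)) := fun j =>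
      Relation.ReflTransGen.single (step1 j)
    have hubAto : ∀ j : Fin r, R (Sum.inl (some (f j))) (Sum.inl none) := fun j =>
      (Relation.ReflTransGen.single (step3 j)).tail step4
    have hubAfrom : ∀ j : Fin r, R (Sum.inl none) (Sum.inl (some (f j))) := fun j =>
      (hubBfrom j).tail (step2 j)
    have hubB0to : R (Sum.inr none) (Sum.inl none) := Relation.ReflTransGen.single step4
    have hubB0from : R (Sum.inl none) (Sum.inr none) :=
      (hubAfrom j₀).tail (step3 j₀)
    -- every adjacency gives mutual reachability to hub for both endpoints
    have hub : ∀ v w, GAdj EP v w →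
        (R v (Sum.inl none) ∧ R (Sum.inl none) v) ∧
        (R w (Sum.inl none) ∧ R (Sum.inl none) w) := by
      rintro v w ⟨e, he, hvw⟩
      have hends : (R (Sum.inl e.1) (Sum.inl none) ∧ R (Sum.inl none) (Sum.inl e.1)) ∧
          (R (Sum.inr e.2) (Sum.inl none) ∧ R (Sum.inl none) (Sum.inr e.2)) := by
        rcases he with ⟨h1, h2⟩ | he
        · -- e ∈ Eset : e = (none, some j)
          obtain ⟨i, j⟩ := e
          simp only at h1 h2
          subst h1
          obtain ⟨j, rfl⟩ := Option.ne_none_iff_exists'.mp h2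
          exact ⟨⟨Relation.ReflTransGen.refl, Relation.ReflTransGen.refl⟩,
            hubBto j, hubBfrom j⟩
        · rcases he with rfl | (⟨j, rfl⟩ | ⟨j, rfl⟩)
          · exact ⟨⟨Relation.ReflTransGen.refl, Relation.ReflTransGen.refl⟩,
              hubB0to, hubB0from⟩
          · exact ⟨⟨hubAto j, hubAfrom j⟩, hubB0to, hubB0from⟩
          · exact ⟨⟨hubAto j, hubAfrom j⟩, hubBto j, hubBfrom j⟩
      rcases hvw with ⟨rfl, rfl⟩ | ⟨rfl, rfl⟩
      · exact hends
      · exact ⟨hends.2, hends.1⟩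
    have mutAdj : ∀ v w, GAdj EP v w → TMut W EP v w := by
      intro v w hvw
      obtain ⟨⟨h1, h2⟩, h3, h4⟩ := hub v w hvw
      exact ⟨h1.trans h4, h3.trans h2⟩
    have mutConn : ∀ v w, GConn EP v w → TMut W EP v w := by
      intro v w hconn
      induction hconn with
      | refl => exact ⟨Relation.ReflTransGen.refl, Relation.ReflTransGen.refl⟩
      | tail _ hstep ih =>
        obtain ⟨h1, h2⟩ := ih
        obtain ⟨h3, h4⟩ := mutAdj _ _ hstep
        exact ⟨h1.trans h3, h4.trans h2⟩
    rintro D ⟨v₀, rfl⟩ v hv w hw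
    exact mutConn v w (gconn_symm hv |>.trans hw)
  · -- PropN2
    have e1 : GAdj P (Sum.inl none) (Sum.inr none) := ⟨c, hmc, Or.inl ⟨rfl, rfl⟩⟩
    have e2 : ∀ j, GAdj P (Sum.inr none) (Sum.inl (some (f j))) :=
      fun j => ⟨(some (f j), none), hm1 j, Or.inr ⟨rfl, rfl⟩⟩
    have e3 : ∀ j, GAdj P (Sum.inl (some (f j))) (Sum.inr (some j)) :=
      fun j => ⟨(some (f j), some j), hm2 j, Or.inl ⟨rfl, rfl⟩⟩
    have connAdj : ∀ v w, GAdj (Eset q r) v w → GConn P v w := by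
      rintro v w ⟨e, ⟨h1, h2⟩, hvw⟩
      obtain ⟨i, j⟩ := e
      simp only at h1 h2
      subst h1
      obtain ⟨j, rfl⟩ := Option.ne_none_iff_exists'.mp h2
      have key : GConn P (Sum.inl none) (Sum.inr (some j)) :=
        ((Relation.ReflTransGen.single e1).tail (e2 j)).tail (e3 j)
      rcases hvw with ⟨rfl, rfl⟩ | ⟨rfl, rfl⟩
      · exact key
      · exact gconn_symm key
    have connConn : ∀ v w, GConn (Eset q r) v w → GConn P v w := by
      intro v w hconn
      induction hconn with
      | refl => exact Relation.ReflTransGen.refl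
      | tail _ hstep ih => exact ih.trans (connAdj _ _ hstep)
    rintro D ⟨v₀, rfl⟩ v hv w hw
    exact connConn v w (gconn_symm hv |>.trans hw)
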